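/- In the affine braid group B(Ã_n) with n≥3, set a_3 := σ_3σ_4⋯σ_n a_{n+1} σ_n^{-1}⋯σ_4^{-1}σ_3^{-1}. Then the following identities hold: σ_1a_3σ_1 = a_3σ_1a_3; σ_3a_3σ_3 = a_3σ_3a_3; σ_ia_3 = a_3σ_i for every 4≤i≤n; and σ_3σ_2a_3σ_3 = σ_2a_3σ_3σ_2. -/

import Mathlib

/-- Relators of the affine braid group `B(Ã_n)`: generator `some i` (`i : Fin n`)
stands for `σ_{i+1}`, and `none` stands for `a_{n+1}`. -/
def braidRelsAff (n : ℕ) : Set (FreeGroup (Option (Fin n))) :=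
  { r | (∃ i j : Fin n, (i : ℕ) + 2 ≤ (j : ℕ) ∧
          r = FreeGroup.of (some i) * FreeGroup.of (some j) *
              (FreeGroup.of (some j) * FreeGroup.of (some i))⁻¹) ∨
        (∃ i j : Fin n, (j : ℕ) = (i : ℕ) + 1 ∧
          r = FreeGroup.of (some i) * FreeGroup.of (some j) * FreeGroup.of (some i) *
              (FreeGroup.of (some j) * FreeGroup.of (some i) * FreeGroup.of (some j))⁻¹) ∨
        (∃ i : Fin n, 1 ≤ (i : ℕ) ∧ (i : ℕ) + 2 ≤ n ∧
          r = FreeGroup.of (some i) * FreeGroup.of none *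
              (FreeGroup.of none * FreeGroup.of (some i))⁻¹) ∨
        (∃ i : Fin n, ((i : ℕ) = 0 ∨ (i : ℕ) + 1 = n) ∧
          r = FreeGroup.of (some i) * FreeGroup.of none * FreeGroup.of (some i) *
              (FreeGroup.of none * FreeGroup.of (some i) * FreeGroup.of none)⁻¹) }

/-- The affine (`Ã`-type) braid group `B(Ã_n)`, with generators `σ_1, …, σ_n` and `a_{n+1}`. -/
abbrev BraidAff (n : ℕ) : Type := PresentedGroup (braidRelsAff n)

/-- The word `σ_3 σ_4 ⋯ σ_n` in `B(Ã_n)`. -/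
noncomputable def conjWord (n : ℕ) : BraidAff n :=
  (((List.finRange n).drop 2).map fun i => (PresentedGroup.of (some i) : BraidAff n)).prod

/-- `a_3 = σ_3 ⋯ σ_n a_{n+1} σ_n⁻¹ ⋯ σ_3⁻¹` in `B(Ã_n)`. -/
noncomputable def a3 (n : ℕ) : BraidAff n :=
  conjWord n * PresentedGroup.of none * (conjWord n)⁻¹

namespace Stmt6Aux

/- generic group lemmas -/
lemma braid_conj_step {G : Type*} [Group G] (s t y : G)
    (hb : s*t*s = t*s*t) (hc : s*y = y*s) (hih : t*y*t = y*t*y) :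
    s*(t*y*t⁻¹)*s = (t*y*t⁻¹)*s*(t*y*t⁻¹) := by
  have hc' : s⁻¹*y*s = y := by
    rw [mul_assoc, ← hc, ← mul_assoc, inv_mul_cancel, one_mul]
  have hci : y*s⁻¹ = s⁻¹*y := by
    rw [mul_inv_eq_iff_eq_mul]; exact hc'.symm
  have e : t⁻¹ * s * t = s*t*s⁻¹ := by
    rw [eq_mul_inv_iff_mul_eq, mul_assoc, mul_assoc, inv_mul_eq_iff_eq_mul]
    simpa [mul_assoc] using hb
  apply mul_left_cancel (a := t⁻¹)
  apply mul_right_cancel (b := t)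
  have h1 : t⁻¹ * (s*(t*y*t⁻¹)*s) * t = (s*t*s⁻¹) * y * (s*t*s⁻¹) := by
    calc t⁻¹ * (s*(t*y*t⁻¹)*s) * t = (t⁻¹*s*t) * y * (t⁻¹*s*t) := by group
    _ = (s*t*s⁻¹) * y * (s*t*s⁻¹) := by rw [e]
  rw [h1]
  have h2 : (s*t*s⁻¹) * y * (s*t*s⁻¹) = s * (t*y*t) * s⁻¹ := by
    calc (s*t*s⁻¹) * y * (s*t*s⁻¹) = s*t*(s⁻¹*y*s)*t*s⁻¹ := by group
    _ = s*t*y*t*s⁻¹ := by rw [hc']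
    _ = s * (t*y*t) * s⁻¹ := by group
  rw [h2, hih]
  calc s*(y*t*y)*s⁻¹ = (s*y)*t*(y*s⁻¹) := by group
  _ = (y*s)*t*(s⁻¹*y) := by rw [hc, hci]
  _ = y*(s*t*s⁻¹)*y := by group
  _ = y*(t⁻¹*s*t)*y := by rw [← e]
  _ = t⁻¹*((t*y*t⁻¹)*s*(t*y*t⁻¹))*t := by group

lemma conj_rel {G : Type*} [Group G] (s a q : G) (hc : s*q = q*s) (hr : s*a*s = a*s*a) :
    s*(q*a*q⁻¹)*s = (q*a*q⁻¹)*s*(q*a*q⁻¹) := by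
  have hs : q*s*q⁻¹ = s := by rw [← hc]; group
  have := congrArg (fun x => q * x * q⁻¹) hr
  calc s*(q*a*q⁻¹)*s = (q*s*q⁻¹)*(q*a*q⁻¹)*(q*s*q⁻¹) := by rw [hs]
  _ = q*(s*a*s)*q⁻¹ := by group
  _ = q*(a*s*a)*q⁻¹ := by rw [hr]
  _ = (q*a*q⁻¹)*(q*s*q⁻¹)*(q*a*q⁻¹) := by group
  _ = (q*a*q⁻¹)*s*(q*a*q⁻¹) := by rw [hs]

lemma sq_step {G : Type*} [Group G] (t y : G) (hih : t*y*t = y*t*y) :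
    t*(t*y*t⁻¹)*t = (t*y*t⁻¹)*t*(t*y*t⁻¹) := by
  have h2 : (t*y*t⁻¹)*t*(t*y*t⁻¹) = t*(y*t*y)*t⁻¹ := by group
  rw [h2, ← hih]; group

lemma four_step {G : Type*} [Group G] (s t y : G)
    (hb : s*t*s = t*s*t) (hc : s*y = y*s) :
    t*s*(t*y*t⁻¹)*t = s*(t*y*t⁻¹)*t*s := by
  calc t*s*(t*y*t⁻¹)*t = (t*s*t)*y := by group
  _ = (s*t*s)*y := by rw [← hb]
  _ = s*t*(s*y) := by group
  _ = s*t*(y*s) := by rw [hc]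
  _ = s*(t*y*t⁻¹)*t*s := by group

variable {n : ℕ}

noncomputable def σ (i : Fin n) : BraidAff n := PresentedGroup.of (some i)
noncomputable def A : BraidAff n := PresentedGroup.of none

lemma relOne {r : FreeGroup (Option (Fin n))} (h : r ∈ braidRelsAff n) :
    PresentedGroup.mk (braidRelsAff n) r = 1 := by
  apply (QuotientGroup.eq_one_iff _).2
  exact Subgroup.subset_normalClosure h

lemma comm_σσ {i j : Fin n} (h : (i : ℕ) + 2 ≤ (j : ℕ)) : Commute (σ i) (σ j) := by
  have := relOne (n := n) (Or.inl ⟨i, j, h, rfl⟩)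
  simp only [map_mul, map_inv, mul_inv_eq_one] at this
  exact this

lemma braid {i j : Fin n} (h : (j : ℕ) = (i : ℕ) + 1) : σ i * σ j * σ i = σ j * σ i * σ j := by
  have := relOne (n := n) (Or.inr (Or.inl ⟨i, j, h, rfl⟩))
  simp only [map_mul, map_inv, mul_inv_eq_one] at this
  exact this

lemma comm_σA {i : Fin n} (h1 : 1 ≤ (i : ℕ)) (h2 : (i : ℕ) + 2 ≤ n) : Commute (σ i) A := by
  have := relOne (n := n) (Or.inr (Or.inr (Or.inl ⟨i, h1, h2, rfl⟩)))
  simp only [map_mul, map_inv, mul_inv_eq_one] at this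
  exact this

lemma relEnd {i : Fin n} (h : (i : ℕ) = 0 ∨ (i : ℕ) + 1 = n) : σ i * A * σ i = A * σ i * A := by
  have := relOne (n := n) (Or.inr (Or.inr (Or.inr ⟨i, h, rfl⟩)))
  simp only [map_mul, map_inv, mul_inv_eq_one] at this
  exact this

/-- suffix product `σ_k ⋯ σ_{n-1}` (Lean indices) -/
noncomputable def P (n k : ℕ) : BraidAff n :=
  (((List.finRange n).drop k).map fun i => σ i).prod

noncomputable def Y (n k : ℕ) : BraidAff n := P n k * A * (P n k)⁻¹

lemma P_succ {k : ℕ} (h : k < n) : P n k = σ ⟨k, h⟩ * P n (k+1) := by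
  unfold P
  rw [show (List.finRange n).drop k = ⟨k, h⟩ :: (List.finRange n).drop (k+1) by
    rw [List.drop_eq_getElem_cons (by simpa using h)]; simp]
  simp

lemma P_top : P n n = 1 := by
  unfold P
  rw [show (List.finRange n).drop n = [] by simp, List.map_nil, List.prod_nil]

lemma commP {j : Fin n} {k : ℕ} (h : (j : ℕ) + 2 ≤ k) : Commute (σ j) (P n k) := by
  apply Commute.list_prod_right
  intro y hy
  obtain ⟨i, hi, rfl⟩ := List.mem_map.1 hy
  obtain ⟨m, hm, rfl⟩ := List.getElem_of_mem hi
  apply comm_σσ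
  simp only [List.getElem_drop, List.getElem_finRange]
  simp only [Fin.coe_cast, Fin.val_mk] at *
  omega

lemma commY {j : Fin n} {k : ℕ} (h1 : 1 ≤ (j : ℕ)) (h2 : (j : ℕ) + 2 ≤ k) (h3 : k ≤ n) :
    Commute (σ j) (Y n k) :=
  ((commP h2).mul_right (comm_σA h1 (le_trans h2 h3))).mul_right (commP h2).inv_right

lemma shift (i : Fin n) : ∀ (m k : ℕ), (i : ℕ) - k - 1 = m → k < (i : ℕ) →
    σ i * P n k = P n k * σ ⟨(i : ℕ) - 1, by omega⟩ := by
  intro m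
  induction m with
  | zero =>
    intro k hm hk
    have hik : (i : ℕ) = k + 1 := by omega
    have h1 : k < n := by have := i.isLt; omega
    have h2 : k + 1 < n := by have := i.isLt; omega
    have hi : i = ⟨k+1, h2⟩ := Fin.ext hik
    have hi' : (⟨(i : ℕ) - 1, by omega⟩ : Fin n) = ⟨k, h1⟩ := Fin.ext (by simp; omega)
    rw [hi', hi, P_succ h1, P_succ h2]
    have hb := braid (i := ⟨k, h1⟩) (j := ⟨k+1, h2⟩) rfl
    have hcom : σ (⟨k, h1⟩ : Fin n) * P n (k+2) = P n (k+2) * σ ⟨k, h1⟩ := commP (by simp)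
    calc σ (⟨k+1, h2⟩ : Fin n) * (σ ⟨k, h1⟩ * (σ ⟨k+1, h2⟩ * P n (k+2)))
        = (σ ⟨k+1, h2⟩ * σ ⟨k, h1⟩ * σ ⟨k+1, h2⟩) * P n (k+2) := by group
    _ = (σ ⟨k, h1⟩ * σ ⟨k+1, h2⟩ * σ ⟨k, h1⟩) * P n (k+2) := by rw [← hb]
    _ = σ ⟨k, h1⟩ * σ ⟨k+1, h2⟩ * (σ ⟨k, h1⟩ * P n (k+2)) := by group
    _ = σ ⟨k, h1⟩ * σ ⟨k+1, h2⟩ * (P n (k+2) * σ ⟨k, h1⟩) := by rw [hcom]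
    _ = σ ⟨k, h1⟩ * (σ ⟨k+1, h2⟩ * P n (k+2)) * σ ⟨k, h1⟩ := by group
  | succ m ih =>
    intro k hm hk
    have h1 : k < n := by have := i.isLt; omega
    have hcom : σ i * σ (⟨k, h1⟩ : Fin n) = σ ⟨k, h1⟩ * σ i :=
      (comm_σσ (i := ⟨k, h1⟩) (j := i) (by simp; omega)).symm
    have hih := ih (k+1) (by omega) (by omega)
    rw [P_succ h1]
    calc σ i * (σ ⟨k, h1⟩ * P n (k+1)) = (σ i * σ ⟨k, h1⟩) * P n (k+1) := by group
    _ = (σ ⟨k, h1⟩ * σ i) * P n (k+1) := by rw [hcom]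
    _ = σ ⟨k, h1⟩ * (σ i * P n (k+1)) := by group
    _ = σ ⟨k, h1⟩ * (P n (k+1) * σ ⟨(i : ℕ) - 1, by omega⟩) := by rw [hih]
    _ = σ ⟨k, h1⟩ * P n (k+1) * σ ⟨(i : ℕ) - 1, by omega⟩ := by group

lemma key : ∀ (m k : ℕ) (_hm : n - k = m) (hk : 2 ≤ k) (hkn : k ≤ n),
    σ (⟨k-1, by omega⟩ : Fin n) * Y n k * σ ⟨k-1, by omega⟩ =
      Y n k * σ ⟨k-1, by omega⟩ * Y n k := by
  intro m
  induction m with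
  | zero =>
    intro k hm hk hkn
    have hkn' : n = k := by omega
    subst hkn'
    have hY : Y n n = A := by rw [Y, P_top, one_mul, inv_one, mul_one]
    rw [hY]
    exact relEnd (Or.inr (by simp; omega))
  | succ m ih =>
    intro k hm hk hkn
    have h1 : k < n := by omega
    have hY : Y n k = σ ⟨k, h1⟩ * Y n (k+1) * (σ ⟨k, h1⟩)⁻¹ := by
      rw [Y, Y, P_succ h1]; group
    rw [hY]
    have hb : σ (⟨k-1, by omega⟩ : Fin n) * σ ⟨k, h1⟩ * σ ⟨k-1, by omega⟩ =
        σ ⟨k, h1⟩ * σ ⟨k-1, by omega⟩ * σ ⟨k, h1⟩ := braid (by simp; omega)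
    have hc : σ (⟨k-1, by omega⟩ : Fin n) * Y n (k+1) = Y n (k+1) * σ ⟨k-1, by omega⟩ :=
      commY (j := ⟨k-1, by omega⟩) (k := k+1) (by simp; omega) (by simp; omega) (by omega)
    have hih : σ (⟨k, h1⟩ : Fin n) * Y n (k+1) * σ ⟨k, h1⟩ =
        Y n (k+1) * σ ⟨k, h1⟩ * Y n (k+1) := by
      have := ih (k+1) (by omega) (by omega) (by omega)
      convert this using 3 <;> simp
    exact braid_conj_step _ _ _ hb hc hih


lemma comm_conj {G : Type*} [Group G] (x x' a q : G) (hq : x * q = q * x') (ha : x'*a = a*x') :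
    x * (q*a*q⁻¹) = (q*a*q⁻¹) * x := by
  have hinv : x' * q⁻¹ = q⁻¹ * x := by
    rw [mul_inv_eq_iff_eq_mul, mul_assoc, hq, ← mul_assoc, inv_mul_cancel, one_mul]
  calc x*(q*a*q⁻¹) = (x*q)*a*q⁻¹ := by group
  _ = (q*x')*a*q⁻¹ := by rw [hq]
  _ = q*(x'*a)*q⁻¹ := by group
  _ = q*(a*x')*q⁻¹ := by rw [ha]
  _ = q*a*(x'*q⁻¹) := by group
  _ = q*a*(q⁻¹*x) := by rw [hinv]
  _ = q*a*q⁻¹*x := by group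

end Stmt6Aux

open Stmt6Aux in
theorem stmt_6 (n : ℕ) (hn : 3 ≤ n) :
    (PresentedGroup.of (some (⟨0, by omega⟩ : Fin n)) * a3 n *
        PresentedGroup.of (some (⟨0, by omega⟩ : Fin n)) =
      a3 n * PresentedGroup.of (some (⟨0, by omega⟩ : Fin n)) * a3 n) ∧
    (PresentedGroup.of (some (⟨2, by omega⟩ : Fin n)) * a3 n *
        PresentedGroup.of (some (⟨2, by omega⟩ : Fin n)) =
      a3 n * PresentedGroup.of (some (⟨2, by omega⟩ : Fin n)) * a3 n) ∧
    (∀ i : Fin n, 3 ≤ (i : ℕ) →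
      PresentedGroup.of (some i) * a3 n = a3 n * PresentedGroup.of (some i)) ∧
    (PresentedGroup.of (some (⟨2, by omega⟩ : Fin n)) *
        PresentedGroup.of (some (⟨1, by omega⟩ : Fin n)) * a3 n *
        PresentedGroup.of (some (⟨2, by omega⟩ : Fin n)) =
      PresentedGroup.of (some (⟨1, by omega⟩ : Fin n)) * a3 n *
        PresentedGroup.of (some (⟨2, by omega⟩ : Fin n)) *
        PresentedGroup.of (some (⟨1, by omega⟩ : Fin n))) := by
  have ha3 : a3 n = Y n 2 := rfl
  have h2n : 2 < n := by omega
  have hY : Y n 2 = σ ⟨2, h2n⟩ * Y n 3 * (σ ⟨2, h2n⟩)⁻¹ := by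
    rw [Y, Y, P_succ h2n]; group
  refine ⟨?_, ?_, ?_, ?_⟩
  · exact conj_rel (σ ⟨0, by omega⟩) A (P n 2) (commP (by simp)) (relEnd (Or.inl rfl))
  · have hkey : σ (⟨2, h2n⟩ : Fin n) * Y n 3 * σ ⟨2, h2n⟩ = Y n 3 * σ ⟨2, h2n⟩ * Y n 3 :=
      key (n - 3) 3 rfl (by omega) (by omega)
    rw [ha3, hY]
    exact sq_step _ _ hkey
  · intro i hi
    have hsh : σ i * P n 2 = P n 2 * σ ⟨(i : ℕ) - 1, by omega⟩ :=
      shift i ((i : ℕ) - 2 - 1) 2 rfl (by omega)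
    have hA : σ (⟨(i : ℕ) - 1, by omega⟩ : Fin n) * A = A * σ ⟨(i : ℕ) - 1, by omega⟩ :=
      comm_σA (by simp; omega) (by have h2 := i.isLt; simp; omega)
    exact comm_conj (σ i) (σ ⟨(i : ℕ) - 1, by omega⟩) A (P n 2) hsh hA
  · have hb : σ (⟨1, by omega⟩ : Fin n) * σ ⟨2, h2n⟩ * σ ⟨1, by omega⟩ =
        σ ⟨2, h2n⟩ * σ ⟨1, by omega⟩ * σ ⟨2, h2n⟩ := braid rfl
    have hc : σ (⟨1, by omega⟩ : Fin n) * Y n 3 = Y n 3 * σ ⟨1, by omega⟩ :=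
      commY (j := ⟨1, by omega⟩) (k := 3) (by simp) (by simp) (by omega)
    rw [ha3, hY]
    exact four_step _ _ _ hb hc
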